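/- Let k be a field of characteristic zero. Then the center of the first Weyl algebra A_1(k) = k⟨x,y⟩/(yx − xy − 1) is k. -/

import Mathlib

universe u

/-- The defining relation of the first Weyl algebra: `yx - xy = 1`,
i.e. `y * x = x * y + 1`, where `x` is the generator indexed by `0` and
`y` the generator indexed by `1`. -/
inductive WeylRel (k : Type u) [Field k] :
    FreeAlgebra k (Fin 2) → FreeAlgebra k (Fin 2) → Prop
  | rel : WeylRel k (FreeAlgebra.ι k 1 * FreeAlgebra.ι k 0)
      (FreeAlgebra.ι k 0 * FreeAlgebra.ι k 1 + 1)

/-- The first Weyl algebra `A₁(k) = k⟨x,y⟩/(yx - xy - 1)`. -/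
def WeylAlgebra1 (k : Type u) [Field k] : Type u := RingQuot (WeylRel k)

noncomputable instance (k : Type u) [Field k] : Ring (WeylAlgebra1 k) :=
  inferInstanceAs (Ring (RingQuot (WeylRel k)))

noncomputable instance (k : Type u) [Field k] : Algebra k (WeylAlgebra1 k) :=
  inferInstanceAs (Algebra k (RingQuot (WeylRel k)))


lemma Ypow_mul_X {R : Type u} [Ring R] (X Y : R) (hrel : Y * X = X * Y + 1) :
    ∀ j : ℕ, Y ^ (j+1) * X = X * Y ^ (j+1) + (j+1 : ℕ) • Y ^ j := by
  intro j
  induction j with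
  | zero => simpa using hrel
  | succ j ih =>
    calc Y ^ (j+2) * X = Y * (Y ^ (j+1) * X) := by rw [pow_succ' Y (j+1), mul_assoc]
      _ = Y * (X * Y ^ (j+1)) + (j+1 : ℕ) • (Y * Y ^ j) := by rw [ih, mul_add, mul_smul_comm]
      _ = (Y * X) * Y ^ (j+1) + (j+1 : ℕ) • Y ^ (j+1) := by rw [mul_assoc, pow_succ' Y j]
      _ = X * Y ^ (j+2) + ((j+1 : ℕ) • Y ^ (j+1) + Y ^ (j+1)) := by
          rw [hrel, add_mul, one_mul, mul_assoc, ← pow_succ' Y (j+1)]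
          abel
      _ = X * Y ^ (j+2) + (j+2 : ℕ) • Y ^ (j+1) := by
          congr 1
          conv_rhs => rw [succ_nsmul (Y ^ (j+1)) (j+1)]

section Span
variable {k : Type u} [Field k] {A : Type u} [Ring A] [Algebra k A]
variable (X Y : A) (hrel : Y * X = X * Y + 1)

/-- The span of the normal-form monomials `X^i Y^j`. -/
def normalSpan : Submodule k A :=
  Submodule.span k (Set.range fun p : ℕ × ℕ => X ^ p.1 * Y ^ p.2)

lemma basic_mem (i j : ℕ) : X ^ i * Y ^ j ∈ normalSpan X Y (k := k) :=
  Submodule.subset_span ⟨(i, j), rfl⟩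

lemma X_mul_mem {w : A} (hw : w ∈ normalSpan X Y (k := k)) :
    X * w ∈ normalSpan X Y (k := k) := by
  induction hw using Submodule.span_induction with
  | mem x hx =>
    obtain ⟨⟨i, j⟩, rfl⟩ := hx
    rw [← mul_assoc, ← pow_succ' X i]
    exact basic_mem X Y (i+1) j
  | zero => simpa using Submodule.zero_mem _
  | add a b _ _ ha hb => rw [mul_add]; exact Submodule.add_mem _ ha hb
  | smul c a _ ha => rw [mul_smul_comm]; exact Submodule.smul_mem _ c ha

lemma mul_Y_mem {w : A} (hw : w ∈ normalSpan X Y (k := k)) :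
    w * Y ∈ normalSpan X Y (k := k) := by
  induction hw using Submodule.span_induction with
  | mem x hx =>
    obtain ⟨⟨i, j⟩, rfl⟩ := hx
    rw [mul_assoc, ← pow_succ Y j]
    exact basic_mem X Y i (j+1)
  | zero => simpa using Submodule.zero_mem _
  | add a b _ _ ha hb => rw [add_mul]; exact Submodule.add_mem _ ha hb
  | smul c a _ ha => rw [smul_mul_assoc]; exact Submodule.smul_mem _ c ha

lemma Ypow_mul_Xpow_mem (hrel : Y * X = X * Y + 1) (a : ℕ) : ∀ j : ℕ, Y ^ j * X ^ a ∈ normalSpan X Y (k := k) := by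
  induction a with
  | zero => intro j; simpa using basic_mem X Y 0 j
  | succ a ih =>
    intro j
    match j with
    | 0 => simpa using basic_mem X Y (a+1) 0
    | j+1 =>
      have : Y ^ (j+1) * X ^ (a+1) = (Y ^ (j+1) * X) * X ^ a := by
        rw [mul_assoc, ← pow_succ' X a]
      rw [this, Ypow_mul_X X Y hrel j, add_mul, smul_mul_assoc, mul_assoc]
      exact Submodule.add_mem _ (X_mul_mem X Y (ih (j+1)))
        (nsmul_mem (ih j) (j+1))

lemma mul_mem' (hrel : Y * X = X * Y + 1) {w₁ w₂ : A} (h₁ : w₁ ∈ normalSpan X Y (k := k))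
    (h₂ : w₂ ∈ normalSpan X Y (k := k)) : w₁ * w₂ ∈ normalSpan X Y (k := k) := by
  induction h₁ using Submodule.span_induction with
  | mem x hx =>
    obtain ⟨⟨i, j⟩, rfl⟩ := hx
    dsimp only
    -- reduce to `X^i * (Y^j * w₂)`; handle via induction on h₂
    rw [mul_assoc]
    have hYw : Y ^ j * w₂ ∈ normalSpan X Y (k := k) := by
      induction h₂ using Submodule.span_induction with
      | mem y hy =>
        obtain ⟨⟨a, b⟩, rfl⟩ := hy
        dsimp only
        rw [← mul_assoc]
        -- (Y^j * X^a) * Y^b ∈ S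
        have h := Ypow_mul_Xpow_mem (k := k) X Y hrel a j
        induction b with
        | zero => simpa using h
        | succ b ihb =>
          have : Y ^ j * X ^ a * Y ^ (b+1) = (Y ^ j * X ^ a * Y ^ b) * Y := by
            rw [pow_succ Y b, ← mul_assoc]
          rw [this]
          exact mul_Y_mem X Y ihb
      | zero => simpa using Submodule.zero_mem _
      | add a b _ _ ha hb => rw [mul_add]; exact Submodule.add_mem _ ha hb
      | smul c a _ ha => rw [mul_smul_comm]; exact Submodule.smul_mem _ c ha
    -- now left-multiply by X^i
    clear h₂
    induction i with
    | zero => simpa using hYw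
    | succ i ihi =>
      have : X ^ (i+1) * (Y ^ j * w₂) = X * (X ^ i * (Y ^ j * w₂)) := by
        rw [pow_succ' X i, mul_assoc]
      rw [this]
      exact X_mul_mem X Y ihi
  | zero => simpa using Submodule.zero_mem _
  | add a b _ _ ha hb => rw [add_mul]; exact Submodule.add_mem _ ha hb
  | smul c a _ ha => rw [smul_mul_assoc]; exact Submodule.smul_mem _ c ha

end Span

namespace WeylAux

open Polynomial

variable (k : Type u) [Field k]

noncomputable def Xg : WeylAlgebra1 k :=
  RingQuot.mkAlgHom k (WeylRel k) (FreeAlgebra.ι k 0)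
noncomputable def Yg : WeylAlgebra1 k :=
  RingQuot.mkAlgHom k (WeylRel k) (FreeAlgebra.ι k 1)

lemma weyl_rel : Yg k * Xg k = Xg k * Yg k + 1 := by
  have := RingQuot.mkAlgHom_rel k (WeylRel.rel (k := k))
  rw [map_mul, map_add, map_mul, map_one] at this
  exact this

lemma span_top (w : WeylAlgebra1 k) : w ∈ normalSpan (Xg k) (Yg k) (k := k) := by
  obtain ⟨f, rfl⟩ := RingQuot.mkAlgHom_surjective k (WeylRel k) w
  induction f using FreeAlgebra.induction with
  | grade0 r =>
    have : (RingQuot.mkAlgHom k (WeylRel k)) (algebraMap k _ r)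
        = r • (Xg k ^ 0 * Yg k ^ 0) := by
      simp only [pow_zero, mul_one, Algebra.smul_def, mul_one, AlgHom.commutes]
      exact Algebra.algebraMap_eq_smul_one (A := RingQuot (WeylRel k)) r
    rw [this]
    exact Submodule.smul_mem _ r (basic_mem _ _ 0 0)
  | grade1 i =>
    fin_cases i
    · have := basic_mem (k := k) (Xg k) (Yg k) 1 0
      simp only [pow_one, pow_zero, mul_one, one_mul] at this
      exact this
    · have := basic_mem (k := k) (Xg k) (Yg k) 0 1
      simp only [pow_one, pow_zero, mul_one, one_mul] at this
      exact this
  | mul a b ha hb => rw [map_mul]; exact mul_mem' _ _ (weyl_rel k) ha hb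
  | add a b ha hb => rw [map_add]; exact Submodule.add_mem _ ha hb

noncomputable def Mm : Module.End k (Polynomial k) := LinearMap.mulLeft k (X : k[X])
noncomputable def Dd : Module.End k (Polynomial k) := derivative

lemma MD_rel : Dd k * Mm k = Mm k * Dd k + 1 := by
  apply LinearMap.ext
  intro p
  simp only [Mm, Dd, Module.End.mul_apply, LinearMap.mulLeft_apply, LinearMap.add_apply,
    Module.End.one_apply, derivative_mul, derivative_X, one_mul]
  ring

noncomputable def ρ : WeylAlgebra1 k →ₐ[k] Module.End k (Polynomial k) :=
  RingQuot.liftAlgHom k ⟨FreeAlgebra.lift k ![Mm k, Dd k], by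
    rintro _ _ ⟨⟩
    simp only [map_mul, map_add, map_one, FreeAlgebra.lift_ι_apply,
      Matrix.cons_val_zero, Matrix.cons_val_one, Matrix.head_cons]
    exact MD_rel k⟩

lemma ρ_X : ρ k (Xg k) = Mm k := by
  rw [ρ, Xg]
  erw [RingQuot.liftAlgHom_mkAlgHom_apply]
  simp [FreeAlgebra.lift_ι_apply]

lemma ρ_Y : ρ k (Yg k) = Dd k := by
  rw [ρ, Yg]
  erw [RingQuot.liftAlgHom_mkAlgHom_apply]
  simp [FreeAlgebra.lift_ι_apply]

end WeylAux

namespace WeylAux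

open Polynomial

variable (k : Type u) [Field k]

lemma indep [CharZero k] (c : (ℕ × ℕ) →₀ k)
    (h : (c.sum fun p a => a • (Mm k ^ p.1 * Dd k ^ p.2)) = 0) : c = 0 := by
  have key : ∀ j₀ : ℕ, ∀ i₀ : ℕ, c (i₀, j₀) = 0 := by
    intro j₀
    induction j₀ using Nat.strong_induction_on with
    | _ j₀ IH =>
      intro i₀
      by_cases hmem : (i₀, j₀) ∈ c.support
      swap
      · exact Finsupp.notMem_support_iff.1 hmem
      -- apply the vanishing endomorphism to X ^ j₀
      have happ := congrArg (fun E : Module.End k (Polynomial k) => E ((X : k[X]) ^ j₀)) h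
      rw [Finsupp.sum] at happ
      simp only [LinearMap.coe_sum, Finset.sum_apply, LinearMap.zero_apply,
        LinearMap.smul_apply, Module.End.mul_apply] at happ
      -- rewrite each term in monomial form
      have hterm : ∀ p : ℕ × ℕ,
          c p • ((Mm k ^ p.1) ((Dd k ^ p.2) ((X : k[X]) ^ j₀)))
            = (c p * (Nat.descFactorial j₀ p.2 : k)) • (X : k[X]) ^ (p.1 + (j₀ - p.2)) := by
        rintro ⟨i, j⟩
        dsimp only
        have hD : (Dd k ^ j) ((X : k[X]) ^ j₀)
            = (Nat.descFactorial j₀ j : k) • (X : k[X]) ^ (j₀ - j) := by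
          rw [Dd, Module.End.pow_apply, iterate_derivative_X_pow_eq_smul]
        have hM : ∀ q : k[X], (Mm k ^ i) q = (X : k[X]) ^ i * q := by
          intro q
          rw [Mm, LinearMap.pow_mulLeft]
          rfl
        rw [hD, map_smul, hM, smul_smul, ← pow_add]
      simp only [hterm] at happ
      -- take the coefficient at `i₀`
      have hco := congrArg (fun q : k[X] => coeff q i₀) happ
      simp only [finset_sum_coeff, coeff_smul, coeff_X_pow, coeff_zero, smul_eq_mul] at hco
      rw [Finset.sum_eq_single (i₀, j₀)] at hco
      · simp only [Nat.sub_self, add_zero, eq_self_iff_true, if_true, mul_one] at hco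
        have hfac : ((Nat.descFactorial j₀ j₀ : k)) ≠ 0 := by
          rw [Nat.descFactorial_self]
          exact_mod_cast Nat.cast_ne_zero.2 (Nat.factorial_ne_zero j₀)
        exact (mul_eq_zero.1 hco).resolve_right hfac
      · rintro ⟨i, j⟩ hp hne
        rcases lt_trichotomy j j₀ with hj | hj | hj
        · have := IH j hj i
          simp [this]
        · subst hj
          have hii : i ≠ i₀ := fun hi => hne (by rw [hi])
          rw [Nat.sub_self, add_zero, if_neg hii.symm, mul_zero]
        · rw [Nat.descFactorial_eq_zero_iff_lt.2 hj]
          simp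
      · intro hnot
        exact absurd hmem hnot
  ext p
  exact key p.2 p.1

end WeylAux

namespace WeylAux

open Polynomial

variable (k : Type u) [Field k]

lemma rho_ker [CharZero k] {w : WeylAlgebra1 k} (hw : ρ k w = 0) : w = 0 := by
  have hsp := span_top k w
  rw [normalSpan] at hsp
  obtain ⟨c, hc⟩ := Finsupp.mem_span_range_iff_exists_finsupp.1 hsp
  have hmap : ρ k w = c.sum fun p a => a • (Mm k ^ p.1 * Dd k ^ p.2) := by
    rw [← hc, map_finsuppSum]
    refine Finsupp.sum_congr ?_
    intro p _
    rw [map_smul, map_mul, map_pow, map_pow, ρ_X, ρ_Y]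
  rw [hw] at hmap
  have hc0 := indep k c hmap.symm
  rw [← hc, hc0, Finsupp.sum_zero_index]

end WeylAux

/-- Over a field of characteristic zero, the center of the first Weyl algebra is `k`. -/
theorem center_weylAlgebra1_eq_bot (k : Type u) [Field k] [CharZero k] :
    Subalgebra.center k (WeylAlgebra1 k) = ⊥ := by
  rw [eq_bot_iff]
  intro z hz
  have comm := Subalgebra.mem_center_iff.1 hz
  open Polynomial WeylAux in
  set E := WeylAux.ρ k z with hE
  have hEM : Mm k * E = E * Mm k := by
    have h := congrArg (ρ k) (comm (Xg k))
    rw [map_mul, map_mul, ρ_X] at h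
    exact h
  have hED : Dd k * E = E * Dd k := by
    have h := congrArg (ρ k) (comm (Yg k))
    rw [map_mul, map_mul, ρ_Y] at h
    exact h
  set p := E (1 : Polynomial k) with hp
  have hcomm : ∀ n : ℕ, E * (Mm k) ^ n = (Mm k) ^ n * E := fun n =>
    (Commute.pow_right (hEM.symm : Commute E (Mm k)) n)
  have hMn : ∀ n : ℕ, ((Mm k) ^ n) (1 : Polynomial k) = (X : k[X]) ^ n := by
    intro n
    rw [WeylAux.Mm, LinearMap.pow_mulLeft, LinearMap.mulLeft_apply, mul_one]
  have hmon : ∀ n : ℕ, E ((X : k[X]) ^ n) = (X : k[X]) ^ n * p := by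
    intro n
    calc E ((X : k[X]) ^ n) = E (((Mm k) ^ n) 1) := by rw [hMn]
      _ = (E * (Mm k) ^ n) 1 := by rw [Module.End.mul_apply]
      _ = ((Mm k) ^ n * E) 1 := by rw [hcomm]
      _ = ((Mm k) ^ n) p := by rw [Module.End.mul_apply, ← hp]
      _ = (X : k[X]) ^ n * p := by
          rw [WeylAux.Mm, LinearMap.pow_mulLeft, LinearMap.mulLeft_apply]
  have hmul : ∀ f : k[X], E f = f * p := by
    intro f
    induction f using Polynomial.induction_on' with
    | add q r hq hr => rw [map_add, hq, hr, add_mul]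
    | monomial n a =>
      rw [← C_mul_X_pow_eq_monomial, ← smul_eq_C_mul, map_smul, hmon, smul_mul_assoc]
  have hderp : derivative p = 0 := by
    have h := congrArg (fun L : Module.End k (Polynomial k) => L (X : k[X])) hED
    simp only [Module.End.mul_apply] at h
    rw [show (Dd k) (E (X : k[X])) = derivative (E (X : k[X])) from rfl,
      show E ((Dd k) (X : k[X])) = E (derivative (X : k[X])) from rfl,
      derivative_X, hmul, hmul, one_mul] at h
    rw [derivative_mul, derivative_X, one_mul] at h
    have hx : (X : k[X]) * derivative p = 0 := add_eq_left.1 h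
    rcases mul_eq_zero.1 hx with h1 | h2
    · exact absurd h1 X_ne_zero
    · exact h2
  have hpc : p = C (p.coeff 0) := eq_C_of_derivative_eq_zero hderp
  have hker : WeylAux.ρ k (z - algebraMap k (WeylAlgebra1 k) (p.coeff 0)) = 0 := by
    rw [map_sub, AlgHom.commutes, ← hE]
    apply LinearMap.ext
    intro f
    rw [LinearMap.sub_apply, LinearMap.zero_apply, Module.algebraMap_end_apply, hmul f]
    conv_lhs => rw [hpc]
    rw [mul_comm, ← smul_eq_C_mul]
    simp
  have hz0 := WeylAux.rho_ker k hker
  rw [sub_eq_zero] at hz0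
  exact Algebra.mem_bot.2 ⟨p.coeff 0, hz0.symm⟩
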